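/- In a model M of T, a formula φ(x;y) is an equation if and only if for every b in M the set φ(M,b) is indiscernibly closed, i.e., whenever (a_i)_{i∈ℕ} is an indiscernible sequence with a_i ∈ φ(M,b) for all i>0, then a_0 ∈ φ(M,b). (It suffices to verify this in a sufficiently saturated model.) -/

import Mathlib

open FirstOrder FirstOrder.Language Set

universe u v w

namespace Equationality

variable {L : FirstOrder.Language.{u, v}}

section Struc
variable {M : Type w} [L.Structure M]

/-- The instance of the formula `φ(x; y)` at the parameter tuple `b`. -/
def instSet {α β : Type*} (φ : L.Formula (α ⊕ β)) (b : β → M) : Set (α → M) :=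
  {a | φ.Realize (Sum.elim a b)}

/-- A sequence of `γ`-tuples indexed by a linear order is indiscernible if any two strictly
increasing finite subsequences satisfy the same formulas. -/
def IsIndiscernible {I : Type*} [LinearOrder I] {γ : Type*} (a : I → γ → M) : Prop :=
  ∀ (n : ℕ) (i j : Fin n → I), StrictMono i → StrictMono j →
    ∀ φ : L.Formula (Fin n × γ),
      φ.Realize (fun p => a (i p.1) p.2) ↔ φ.Realize (fun p => a (j p.1) p.2)

/-- The complete type of a tuple over `∅`, as the set of formulas it realizes. -/
def typeOf {γ : Type*} (a : γ → M) : Set (L.Formula γ) := {φ | φ.Realize a}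

end Struc

variable (T : L.Theory)

/-- `φ(x; y)` is an equation for `T`: in every model of `T`, the family of finite
intersections of instances of `φ` has the descending chain condition. -/
def IsEquation {α β : Type*} (φ : L.Formula (α ⊕ β)) : Prop :=
  ∀ (M : Theory.ModelType.{u, v, max u v} T) (B : ℕ → Finset (β → M)),
    (Antitone fun n => ⋂ b ∈ B n, instSet φ b) →
    ∃ N, ∀ n, N ≤ n → (⋂ b ∈ B n, instSet φ b) = ⋂ b ∈ B N, instSet φ b

/-- A complete type over `∅` (in the variables `γ`), presented as the set of formulas
realized by some tuple in some model of `T`. -/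
def IsRealizedType {γ : Type*} (p : Set (L.Formula γ)) : Prop :=
  ∃ (M : Theory.ModelType.{u, v, max u v} T) (a : γ → M), typeOf a = p

/-- `p ⟶ q`: there are a model of `T`, a tuple `b` and an indiscernible sequence `(aᵢ)`
with `aᵢ ⊨ p(x, b)` for `i > 0` and `a₀ ⊨ q(x, b)`. -/
def Pf {α β : Type*} (p q : Set (L.Formula (α ⊕ β))) : Prop :=
  ∃ (M : Theory.ModelType.{u, v, max u v} T) (b : β → M) (a : ℕ → α → M),
    IsIndiscernible (L := L) a ∧ (∀ i : ℕ, 0 < i → typeOf (Sum.elim (a i) b) = p) ∧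
      typeOf (Sum.elim (a 0) b) = q

/-- A subset `X` of the `α`-tuples of a structure is indiscernibly closed if whenever `(aᵢ)` is an
indiscernible sequence with `aᵢ ∈ X` for all `i > 0`, then also `a₀ ∈ X`. -/
def IsIndiscerniblyClosed {M : Type w} [L.Structure M] {α : Type*} (X : Set (α → M)) : Prop :=
  ∀ a : ℕ → α → M, IsIndiscernible (L := L) a → (∀ i : ℕ, 0 < i → a i ∈ X) → a 0 ∈ X


/-- Infinite Ramsey theorem, subsequence form: for any coloring of strictly increasing
`n`-tuples of naturals by finitely many colors, there is a strictly increasing subsequence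
on which the color is constant. -/
theorem ramsey_subseq {C : Type*} [Finite C] :
    ∀ (n : ℕ) (f : (Fin n → ℕ) → C), ∃ g : ℕ → ℕ, StrictMono g ∧
      ∀ u v : Fin n → ℕ, StrictMono u → StrictMono v → f (g ∘ u) = f (g ∘ v) := by
  intro n
  induction n with
  | zero =>
    intro f
    exact ⟨id, strictMono_id, fun u v _ _ => by rw [Subsingleton.elim u v]⟩
  | succ n ih =>
    intro f
    classical
    let fo : (ℕ → ℕ) → (Fin n → ℕ) → C := fun s u =>
      f (Fin.cons (s 0) (fun j => s (1 + u j)))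
    let pick : (ℕ → ℕ) → (ℕ → ℕ) := fun s => (ih (fo s)).choose
    have pick_mono : ∀ s, StrictMono (pick s) := fun s => (ih (fo s)).choose_spec.1
    have pick_spec : ∀ s (u v : Fin n → ℕ), StrictMono u → StrictMono v →
        fo s (pick s ∘ u) = fo s (pick s ∘ v) := fun s => (ih (fo s)).choose_spec.2
    let F : (ℕ → ℕ) → (ℕ → ℕ) := fun s => s ∘ (fun m => 1 + pick s m)
    let σ : ℕ → (ℕ → ℕ) := fun k => F^[k] id
    have σ_succ : ∀ k, σ (k + 1) = F (σ k) := fun k => Function.iterate_succ_apply' F k id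
    have σ_mono : ∀ k, StrictMono (σ k) := by
      intro k
      induction k with
      | zero => exact strictMono_id
      | succ k hk =>
        rw [σ_succ]
        exact hk.comp (fun x y h => by
          simpa using Nat.add_lt_add_left (pick_mono (σ k) h) 1)
    have decomp : ∀ k l, k ≤ l → ∃ ρ : ℕ → ℕ, StrictMono ρ ∧ σ l = σ k ∘ ρ := by
      intro k l hkl
      induction l, hkl using Nat.le_induction with
      | base => exact ⟨id, strictMono_id, rfl⟩
      | succ l hkl hind =>
        obtain ⟨ρ, hρ, hd⟩ := hind
        refine ⟨ρ ∘ (fun m => 1 + pick (σ l) m), hρ.comp (fun x y h => by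
          simpa using Nat.add_lt_add_left (pick_mono (σ l) h) 1), ?_⟩
        rw [σ_succ, hd]
        rfl
    let a : ℕ → ℕ := fun k => σ k 0
    have a_mono : StrictMono a := by
      intro k l hkl
      obtain ⟨ρ, hρ, hd⟩ := decomp (k + 1) l hkl
      have h1 : a l = σ (k + 1) (ρ 0) := congrFun hd 0
      have h2 : σ k 0 < σ (k + 1) 0 := by
        rw [σ_succ]
        exact (σ_mono k) (Nat.succ_le_of_lt (Nat.succ_le_iff.mp (Nat.le_add_right 1 _)))
      calc a k < σ (k + 1) 0 := h2
        _ ≤ σ (k + 1) (ρ 0) := (σ_mono (k + 1)).monotone (Nat.zero_le _)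
        _ = a l := h1.symm
    let c : ℕ → C := fun k => fo (σ k) (pick (σ k) ∘ (fun j : Fin n => (j : ℕ)))
    have homog : ∀ k (u : Fin n → ℕ), StrictMono u →
        f (Fin.cons (a k) (fun j => σ (k + 1) (u j))) = c k := by
      intro k u hu
      have key : ∀ (w : Fin n → ℕ), (fun j => σ (k + 1) (w j)) =
          (fun j => σ k (1 + pick (σ k) (w j))) := by
        intro w; funext j; rw [σ_succ]; rfl
      have h1 : f (Fin.cons (a k) (fun j => σ (k + 1) (u j))) = fo (σ k) (pick (σ k) ∘ u) := by
        rw [key u]; rfl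
      rw [h1]
      exact pick_spec (σ k) u _ hu fun x y h => h
    -- pigeonhole on the colors
    obtain ⟨b, hb⟩ := Finite.exists_infinite_fiber c
    have hinf : (setOf (fun k => c k = b)).Infinite := by
      have h := Set.infinite_coe_iff.mp hb
      have he : c ⁻¹' {b} = setOf (fun k => c k = b) := by
        ext k; simp [Set.mem_preimage]; rfl
      rwa [he] at h
    let p : ℕ → Prop := fun k => c k = b
    have nth_mono : StrictMono (Nat.nth p) := Nat.nth_strictMono hinf
    have nth_mem : ∀ i, c (Nat.nth p i) = b := fun i => Nat.nth_mem_of_infinite hinf i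
    refine ⟨fun m => a (Nat.nth p m), a_mono.comp nth_mono, ?_⟩
    have main : ∀ (u : Fin (n + 1) → ℕ), StrictMono u →
        f ((fun m => a (Nat.nth p m)) ∘ u) = b := by
      intro u hu
      set k := Nat.nth p (u 0) with hk
      have hgt : ∀ j : Fin n, k + 1 ≤ Nat.nth p (u j.succ) := by
        intro j
        exact Nat.succ_le_of_lt (nth_mono (hu (Fin.succ_pos j)))
      let U : Fin n → ℕ := fun j => (decomp (k + 1) _ (hgt j)).choose 0
      have hU : ∀ j, a (Nat.nth p (u j.succ)) = σ (k + 1) (U j) := by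
        intro j
        have := (decomp (k + 1) _ (hgt j)).choose_spec.2
        show σ _ 0 = _
        rw [this]; rfl
      have hUmono : StrictMono U := by
        intro i j hij
        have : σ (k + 1) (U i) < σ (k + 1) (U j) := by
          rw [← hU i, ← hU j]
          exact a_mono (nth_mono (hu (Fin.succ_lt_succ_iff.mpr hij)))
        exact (σ_mono (k + 1)).lt_iff_lt.mp this
      have heq : (fun m => a (Nat.nth p m)) ∘ u =
          Fin.cons (a k) (fun j => σ (k + 1) (U j)) := by
        funext i
        refine Fin.cases ?_ (fun j => ?_) i
        · simp [hk]
        · simp only [Function.comp_apply, Fin.cons_succ]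
          exact hU j
      rw [heq, homog k U hUmono]
      exact nth_mem (u 0)
    intro u v hu hv
    rw [main u hu, main v hv]

/-- From any sequence of `δ`-tuples one can extract a subsequence that is indiscernible with
respect to a given finite list of formulas. -/
theorem exists_subseq_indisc {δ : Type*} {M : Type*} [L.Structure M] (e : ℕ → δ → M)
    (D : List (Σ n : ℕ, L.Formula (Fin n × δ))) :
    ∃ g : ℕ → ℕ, StrictMono g ∧ ∀ d ∈ D, ∀ u v : Fin d.1 → ℕ,
      StrictMono u → StrictMono v →
      (d.2.Realize (fun p => e (g (u p.1)) p.2) ↔ d.2.Realize (fun p => e (g (v p.1)) p.2)) := by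
  classical
  set m : ℕ := (D.map Sigma.fst).sum with hm
  have hle : ∀ d ∈ D, d.1 ≤ m := fun d hd =>
    List.single_le_sum (fun x _ => Nat.zero_le x) _ (List.mem_map_of_mem hd)
  let col : (Fin m → ℕ) → (Fin D.length → Prop) := fun w t =>
    (D.get t).2.Realize
      (fun p => e (w (Fin.castLE (hle _ (List.get_mem D t)) p.1)) p.2)
  obtain ⟨g, hg, hcol⟩ := ramsey_subseq m col
  refine ⟨g, hg, ?_⟩
  intro d hd u v hu hv
  obtain ⟨t, ht⟩ := List.mem_iff_get.mp hd
  subst ht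
  rcases Nat.eq_zero_or_pos (D.get t).1 with h0 | hpos
  · have : (fun p : Fin (D.get t).1 × δ => e (g (u p.1)) p.2) =
        (fun p => e (g (v p.1)) p.2) := by
      funext p
      exact absurd p.1.2 (by omega)
    rw [this]
  · have hne : (D.get t).1 - 1 < (D.get t).1 := by omega
    let pad : (Fin (D.get t).1 → ℕ) → (Fin m → ℕ) := fun w k =>
      if h : (k : ℕ) < (D.get t).1 then w ⟨k, h⟩ else w ⟨(D.get t).1 - 1, hne⟩ + 1 + (k : ℕ)
    have pad_mono : ∀ w : Fin (D.get t).1 → ℕ, StrictMono w → StrictMono (pad w) := by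
      intro w hw i j hij
      show pad w i < pad w j
      by_cases hi : (i : ℕ) < (D.get t).1
      · by_cases hj : (j : ℕ) < (D.get t).1
        · have := hw (show (⟨(i : ℕ), hi⟩ : Fin (D.get t).1) < ⟨(j : ℕ), hj⟩ from hij)
          simp only [pad, dif_pos hi, dif_pos hj]
          exact this
        · have h1 : w ⟨(i : ℕ), hi⟩ ≤ w ⟨(D.get t).1 - 1, hne⟩ :=
            hw.monotone (by simp only [Fin.mk_le_mk]; omega)
          simp only [pad, dif_pos hi, dif_neg hj]
          omega
      · have hj : ¬ (j : ℕ) < (D.get t).1 := by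
          have : (i : ℕ) < (j : ℕ) := hij
          omega
        have hij' : (i : ℕ) < (j : ℕ) := hij
        simp only [pad, dif_neg hi, dif_neg hj]
        omega
    have pad_eq : ∀ (w : Fin (D.get t).1 → ℕ) (p : Fin (D.get t).1),
        pad w (Fin.castLE (hle _ (List.get_mem D t)) p) = w p := by
      intro w p
      simp only [pad]
      rw [dif_pos]
      rfl
    have key := congrFun (hcol (pad u) (pad v) (pad_mono u hu) (pad_mono v hv)) t
    simp only [col, Function.comp_apply] at key
    have ru : ∀ (w : Fin (D.get t).1 → ℕ),
        ((D.get t).2.Realize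
            (fun p => e (g (pad w (Fin.castLE (hle _ (List.get_mem D t)) p.1))) p.2))
          = (D.get t).2.Realize (fun p => e (g (w p.1)) p.2) := by
      intro w
      congr 1
      funext p
      rw [pad_eq]
    rw [ru u, ru v] at key
    exact iff_of_eq key

/-- Compactness: a set of formulas with parameters `γ` that is finitely realizable in models
of `T` is realizable in a model of `T`. -/
theorem exists_model_realize {γ : Type (max u v)} {I : Type*} (F : I → L.Formula γ)
    (h : ∀ J : Finset I, ∃ (M : Theory.ModelType.{u, v, max u v} T) (w : γ → M),
      ∀ j ∈ J, (F j).Realize w) :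
    ∃ (M : Theory.ModelType.{u, v, max u v} T) (w : γ → M), ∀ j, (F j).Realize w := by
  classical
  let T' : L[[γ]].Theory :=
    (L.lhomWithConstants γ).onTheory T ∪ Set.range (fun j => Formula.equivSentence (F j))
  have hsat : T'.IsSatisfiable := by
    rw [Theory.isSatisfiable_iff_isFinitelySatisfiable]
    intro T0 hT0
    let idx : L[[γ]].Sentence → Option I := fun σ =>
      if h : ∃ j, Formula.equivSentence (F j) = σ then some h.choose else none
    let J : Finset I := (T0.image idx).biUnion Option.toFinset
    obtain ⟨M, w, hw⟩ := h J
    letI : (constantsOn γ).Structure M := constantsOn.structure w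
    have hmod : (M : Type (max u v)) ⊨ (↑T0 : L[[γ]].Theory) := by
      rw [Theory.model_iff]
      intro σ hσ
      rcases hT0 hσ with h1 | h2
      · obtain ⟨ψ, hψT, rfl⟩ := h1
        rw [LHom.realize_onSentence]
        exact T.realize_sentence_of_mem hψT
      · obtain ⟨j, rfl⟩ := h2
        have hex : ∃ j0, Formula.equivSentence (F j0) = Formula.equivSentence (F j) := ⟨j, rfl⟩
        have hidx : idx (Formula.equivSentence (F j)) = some hex.choose := dif_pos hex
        have hmem : hex.choose ∈ J := Finset.mem_biUnion.mpr
          ⟨idx (Formula.equivSentence (F j)), Finset.mem_image_of_mem idx hσ, by rw [hidx]; simp⟩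
        have hFeq : F hex.choose = F j := Formula.equivSentence.injective hex.choose_spec
        have hr : (F j).Realize w := hFeq ▸ hw _ hmem
        have hiff := Formula.realize_equivSentence_symm (M := (M : Type (max u v)))
          (Formula.equivSentence (F j)) w
        rw [Equiv.symm_apply_apply] at hiff
        exact hiff.mp hr
    haveI := hmod
    exact Theory.Model.isSatisfiable M
  obtain ⟨N'⟩ := hsat
  letI : L.Structure N' := (L.lhomWithConstants γ).reduct N'
  haveI : (L.lhomWithConstants γ).IsExpansionOn (N' : Type (max u v)) :=
    LHom.isExpansionOn_reduct (L.lhomWithConstants γ) N'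
  have hmodel : (N' : Type (max u v)) ⊨ T := by
    have h1 : (N' : Type (max u v)) ⊨ (L.lhomWithConstants γ).onTheory T :=
      N'.is_model.mono Set.subset_union_left
    exact ((L.lhomWithConstants γ).onTheory_model T).mp h1
  refine ⟨⟨N'⟩, fun a => ((L.con a : N') : N'), fun j => ?_⟩
  have hσ : (N' : Type (max u v)) ⊨ Formula.equivSentence (F j) :=
    T'.realize_sentence_of_mem (Set.mem_union_right _ ⟨j, rfl⟩)
  have := Formula.realize_equivSentence_symm_con (N' : Type (max u v))
    (Formula.equivSentence (F j))
  rw [Equiv.symm_apply_apply] at this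
  exact this.mpr hσ

theorem forward {α β : Type (max u v)} [Finite α] [Finite β]
    (φ : L.Formula (α ⊕ β)) (hEq : IsEquation T φ)
    (M : Theory.ModelType.{u, v, max u v} T) (b : β → M) :
    IsIndiscerniblyClosed (L := L) (instSet φ b) := by
  intro a hind hmem
  classical
  by_contra h0
  have h0' : ¬ φ.Realize (Sum.elim (a 0) b) := h0
  -- the scheme of formulas describing a strictly decreasing chain of instances
  let ψmk : ℕ → ℕ → L.Formula ((ℕ × α) ⊕ (ℕ × β)) := fun i n =>
    φ.relabel (Sum.map (fun x => (i, x)) (fun y => (n, y)))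
  let F : ℕ × ℕ → L.Formula ((ℕ × α) ⊕ (ℕ × β)) := fun p =>
    if p.1 < p.2 then ψmk p.2 p.1 else (ψmk p.1 p.1).not
  -- every finite subscheme is realized in `M`, using indiscernibility
  have hfin : ∀ J : Finset (ℕ × ℕ), ∃ (M' : Theory.ModelType.{u, v, max u v} T)
      (w : ((ℕ × α) ⊕ (ℕ × β)) → M'), ∀ j ∈ J, (F j).Realize w := by
    intro J
    set K : ℕ := (J.sup fun p => p.2) + 1 with hK
    let r : Fin (K + 1) → (α ⊕ β → (Fin (K + 1) × α) ⊕ β) := fun t =>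
      Sum.map (fun x => (t, x)) id
    let χ : L.Formula ((Fin (K + 1) × α) ⊕ β) :=
      (φ.relabel (r 0)).not ⊓ BoundedFormula.iInf
        (fun j : Fin K => φ.relabel (r j.succ))
    let θ : L.Formula (Fin (K + 1) × α) := χ.iExs β
    have hcomp : ∀ (vv : Fin (K + 1) × α → M) (bw : β → M) (t : Fin (K + 1)),
        ((fun z => Sum.elim vv bw (id z)) ∘ r t) = Sum.elim (fun x => vv (t, x)) bw := by
      intro vv bw t
      funext z
      rcases z with x | y <;> rfl
    have hcomp' : ∀ (vv : Fin (K + 1) × α → M) (bw : β → M) (t : Fin (K + 1)),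
        (Sum.elim vv bw ∘ r t) = Sum.elim (fun x => vv (t, x)) bw := hcomp
    have hθ0 : θ.Realize (fun p : Fin (K + 1) × α => a (p.1 : ℕ) p.2) := by
      rw [Formula.realize_iExs]
      refine ⟨b, ?_⟩
      rw [Formula.realize_inf]
      constructor
      · rw [Formula.realize_not, Formula.realize_relabel, hcomp']
        intro hc
        apply h0'
        have : (fun x => a ((0 : Fin (K + 1)) : ℕ) x) = a 0 := by
          simp
        rwa [this] at hc
      · have : ∀ j ∈ (Finset.univ : Finset (Fin K)),
            (φ.relabel (r j.succ)).Realize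
              (fun z => Sum.elim (fun p : Fin (K + 1) × α => a (p.1 : ℕ) p.2) b (id z)) := by
          intro j _
          rw [Formula.realize_relabel, hcomp]
          have : (fun x => a ((j.succ : Fin (K + 1)) : ℕ) x) = a ((j : ℕ) + 1) := by
            simp [Fin.val_succ]
          rw [this]
          exact hmem ((j : ℕ) + 1) (Nat.succ_pos _)
        exact BoundedFormula.realize_iInf.mpr fun j => this j (Finset.mem_univ j)
    have hshift : ∀ n : ℕ, θ.Realize (fun p : Fin (K + 1) × α => a (n + (p.1 : ℕ)) p.2) := by
      intro n
      refine (hind (K + 1) (fun t => n + (t : ℕ)) (fun t => (t : ℕ)) ?_ ?_ θ).mpr hθ0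
      · exact fun s t hst => Nat.add_lt_add_left hst n
      · exact fun s t hst => hst
    have hwit : ∀ n : ℕ, ∃ bw : β → M, (¬ φ.Realize (Sum.elim (a n) bw)) ∧
        ∀ j : Fin K, φ.Realize (Sum.elim (a (n + ((j : ℕ) + 1))) bw) := by
      intro n
      have h1 := hshift n
      rw [Formula.realize_iExs] at h1
      obtain ⟨bw, hbw⟩ := h1
      rw [Formula.realize_inf] at hbw
      refine ⟨bw, ?_, ?_⟩
      · have hn := hbw.1
        rw [Formula.realize_not, Formula.realize_relabel, hcomp'] at hn
        intro hc
        apply hn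
        have : (fun x => a (n + ((0 : Fin (K + 1)) : ℕ)) x) = a n := by
          simp
        rwa [this]
      · intro j
        have hn := BoundedFormula.realize_iInf.mp hbw.2 j
        have hn2 : (φ.relabel (r j.succ)).Realize
            (fun z => Sum.elim (fun p : Fin (K + 1) × α => a (n + (p.1 : ℕ)) p.2) bw (id z)) := hn
        rw [Formula.realize_relabel, hcomp] at hn2
        have : (fun x => a (n + ((j.succ : Fin (K + 1)) : ℕ)) x) = a (n + ((j : ℕ) + 1)) := by
          simp [Fin.val_succ]
        rwa [this] at hn2
    let bw : ℕ → β → M := fun n => (hwit n).choose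
    refine ⟨M, Sum.elim (fun p => a p.1 p.2) (fun p => bw p.1 p.2), ?_⟩
    rintro ⟨n, i⟩ hj
    by_cases hni : n < i
    · have hF : F (n, i) = ψmk i n := if_pos hni
      rw [hF, Formula.realize_relabel]
      have hass : (Sum.elim (fun p : ℕ × α => a p.1 p.2) (fun p : ℕ × β => bw p.1 p.2)) ∘
          (Sum.map (fun x => (i, x)) (fun y => (n, y))) = Sum.elim (a i) (bw n) := by
        funext z
        rcases z with x | y <;> rfl
      rw [hass]
      have hiK : i - n - 1 < K := by
        have : i ≤ J.sup fun p => p.2 := Finset.le_sup (f := fun p : ℕ × ℕ => p.2) hj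
        omega
      have := (hwit n).choose_spec.2 ⟨i - n - 1, hiK⟩
      have heq : n + ((⟨i - n - 1, hiK⟩ : Fin K) : ℕ) + 1 = i := by
        simp only [Fin.val_mk]
        omega
      rw [show n + (((⟨i - n - 1, hiK⟩ : Fin K) : ℕ) + 1) = i by omega] at this
      exact this
    · have hF : F (n, i) = (ψmk n n).not := if_neg hni
      rw [hF, Formula.realize_not, Formula.realize_relabel]
      have hass : (Sum.elim (fun p : ℕ × α => a p.1 p.2) (fun p : ℕ × β => bw p.1 p.2)) ∘
          (Sum.map (fun x => (n, x)) (fun y => (n, y))) = Sum.elim (a n) (bw n) := by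
        funext z
        rcases z with x | y <;> rfl
      rw [hass]
      exact (hwit n).choose_spec.1
  obtain ⟨N, w, hw⟩ := exists_model_realize T F hfin
  let aN : ℕ → α → N := fun i x => w (Sum.inl (i, x))
  let bN : ℕ → β → N := fun n y => w (Sum.inr (n, y))
  let B : ℕ → Finset (β → N) := fun n => (Finset.range n).image bN
  have hBmono : ∀ {n m : ℕ}, n ≤ m → B n ⊆ B m := fun h =>
    Finset.image_subset_image (Finset.range_subset_range.mpr h)
  have hAnti : Antitone fun n => ⋂ b' ∈ B n, instSet φ b' := by
    intro n m hnm x hx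
    exact Set.mem_iInter₂.mpr fun b' hb' => Set.mem_iInter₂.mp hx b' (hBmono hnm hb')
  obtain ⟨N₀, hst⟩ := hEq N B hAnti
  have hmem1 : aN N₀ ∈ ⋂ b' ∈ B N₀, instSet φ b' := by
    refine Set.mem_iInter₂.mpr ?_
    intro b' hb'
    simp only [B, Finset.mem_image, Finset.mem_range] at hb'
    obtain ⟨k, hk, rfl⟩ := hb'
    have := hw (k, N₀)
    rw [show F (k, N₀) = ψmk N₀ k from if_pos hk, Formula.realize_relabel] at this
    have hass : w ∘ (Sum.map (fun x => (N₀, x)) (fun y => (k, y))) =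
        Sum.elim (aN N₀) (bN k) := by
      funext z
      rcases z with x | y <;> rfl
    rwa [hass] at this
  have hmem2 : aN N₀ ∉ ⋂ b' ∈ B (N₀ + 1), instSet φ b' := by
    intro hc
    have hb' : bN N₀ ∈ B (N₀ + 1) := by
      simp only [B, Finset.mem_image, Finset.mem_range]
      exact ⟨N₀, Nat.lt_succ_self _, rfl⟩
    have h1 : aN N₀ ∈ instSet φ (bN N₀) := Set.mem_iInter₂.mp hc _ hb'
    have := hw (N₀, N₀)
    rw [show F (N₀, N₀) = (ψmk N₀ N₀).not from if_neg (lt_irrefl _),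
      Formula.realize_not, Formula.realize_relabel] at this
    have hass : w ∘ (Sum.map (fun x => (N₀, x)) (fun y => (N₀, y))) =
        Sum.elim (aN N₀) (bN N₀) := by
      funext z
      rcases z with x | y <;> rfl
    rw [hass] at this
    exact this h1
  exact hmem2 ((hst (N₀ + 1) (Nat.le_succ _)) ▸ hmem1)

theorem backward {α β : Type (max u v)} [Finite α] [Finite β]
    (φ : L.Formula (α ⊕ β))
    (hcl : ∀ (M : Theory.ModelType.{u, v, max u v} T) (b : β → M),
      IsIndiscerniblyClosed (L := L) (instSet φ b)) :
    IsEquation T φ := by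
  intro M B hAnti
  classical
  by_contra hnot
  push_neg at hnot
  set X : ℕ → Set (α → M) := fun n => ⋂ b ∈ B n, instSet φ b with hX
  -- a strictly decreasing subchain
  let nseq : ℕ → ℕ := fun k => Nat.rec 0 (fun _ ih => (hnot ih).choose) k
  have hnseq_succ : ∀ k, nseq (k + 1) = (hnot (nseq k)).choose := fun _ => rfl
  have hstep : ∀ k, nseq k ≤ nseq (k + 1) ∧ X (nseq (k + 1)) ≠ X (nseq k) := by
    intro k
    rw [hnseq_succ]
    exact ⟨(hnot (nseq k)).choose_spec.1, (hnot (nseq k)).choose_spec.2⟩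
  have hmono : Monotone nseq := monotone_nat_of_le_succ fun k => (hstep k).1
  have hsub : ∀ k, X (nseq (k + 1)) ⊆ X (nseq k) := fun k => hAnti (hstep k).1
  have hwitc : ∀ k, ∃ x, x ∈ X (nseq k) ∧ x ∉ X (nseq (k + 1)) := by
    intro k
    by_contra hc
    push_neg at hc
    exact (hstep k).2 (Set.Subset.antisymm (hsub k) fun x hx => hc x hx)
  let c : ℕ → α → M := fun k => (hwitc k).choose
  have hc1 : ∀ k, c k ∈ X (nseq k) := fun k => (hwitc k).choose_spec.1
  have hc2 : ∀ k, c k ∉ X (nseq (k + 1)) := fun k => (hwitc k).choose_spec.2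
  have hwitd : ∀ k, ∃ bb, bb ∈ B (nseq (k + 1)) ∧ c k ∉ instSet φ bb := by
    intro k
    have h1 := hc2 k
    simp only [hX, Set.mem_iInter, not_forall] at h1
    obtain ⟨bb, hbb, hnb⟩ := h1
    exact ⟨bb, hbb, hnb⟩
  let d : ℕ → β → M := fun k => (hwitd k).choose
  have hd1 : ∀ k, d k ∈ B (nseq (k + 1)) := fun k => (hwitd k).choose_spec.1
  have hd2 : ∀ k, ¬ φ.Realize (Sum.elim (c k) (d k)) := fun k => (hwitd k).choose_spec.2
  have hpat : ∀ k m, k < m → φ.Realize (Sum.elim (c m) (d k)) := by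
    intro k m hkm
    have h1 : c m ∈ X (nseq (k + 1)) := hAnti (hmono (Nat.succ_le_of_lt hkm)) (hc1 m)
    exact Set.mem_iInter₂.mp h1 (d k) (hd1 k)
  -- the sequence of pairs
  let e : ℕ → (α ⊕ β) → M := fun k => Sum.elim (c k) (d k)
  -- formula schemes
  let lift : ∀ n : ℕ, L.Formula (Fin n × (α ⊕ β)) → (Fin n → ℕ) →
      L.Formula (ℕ × (α ⊕ β)) := fun _ ψ u => ψ.relabel (fun p => (u p.1, p.2))
  let pat : ℕ → ℕ → L.Formula (ℕ × (α ⊕ β)) := fun m k =>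
    φ.relabel (Sum.elim (fun x => (m, Sum.inl x)) (fun y => (k, Sum.inr y)))
  let Idx := (Σ n : ℕ, (L.Formula (Fin n × (α ⊕ β))) ×
    {u : Fin n → ℕ // StrictMono u} × {u : Fin n → ℕ // StrictMono u}) ⊕ (ℕ × ℕ)
  let F : Idx → L.Formula (ℕ × (α ⊕ β)) := fun j =>
    match j with
    | Sum.inl ⟨n, ψ, u, v⟩ => (lift n ψ u.1).iff (lift n ψ v.1)
    | Sum.inr (k, m) => if k < m then pat m k else (pat k k).not
  have hfin : ∀ J : Finset Idx, ∃ (M' : Theory.ModelType.{u, v, max u v} T)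
      (w : (ℕ × (α ⊕ β)) → M'), ∀ j ∈ J, (F j).Realize w := by
    intro J
    let D : List (Σ n : ℕ, L.Formula (Fin n × (α ⊕ β))) :=
      J.toList.filterMap (fun j => match j with
        | Sum.inl dd => some ⟨dd.1, dd.2.1⟩
        | Sum.inr _ => none)
    obtain ⟨g, hg, hgind⟩ := exists_subseq_indisc e D
    refine ⟨M, fun p => e (g p.1) p.2, ?_⟩
    intro j hj
    match j with
    | Sum.inl ⟨n, ψ, u, v⟩ =>
      show ((lift n ψ u.1).iff (lift n ψ v.1)).Realize _
      rw [Formula.realize_iff, Formula.realize_relabel, Formula.realize_relabel]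
      have hD : (⟨n, ψ⟩ : Σ n : ℕ, L.Formula (Fin n × (α ⊕ β))) ∈ D := by
        refine List.mem_filterMap.mpr ⟨Sum.inl ⟨n, ψ, u, v⟩, ?_, rfl⟩
        exact Finset.mem_toList.mpr hj
      exact hgind ⟨n, ψ⟩ hD u.1 v.1 u.2 v.2
    | Sum.inr (k, m) =>
      by_cases hkm : k < m
      · show (if k < m then pat m k else (pat k k).not).Realize _
        rw [if_pos hkm]
        show (pat m k).Realize _
        rw [Formula.realize_relabel]
        have hass : ((fun p : ℕ × (α ⊕ β) => e (g p.1) p.2) ∘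
            (Sum.elim (fun x => (m, Sum.inl x)) (fun y => (k, Sum.inr y)))) =
            Sum.elim (c (g m)) (d (g k)) := by
          funext z
          rcases z with x | y <;> rfl
        rw [hass]
        exact hpat (g k) (g m) (hg hkm)
      · show (if k < m then pat m k else (pat k k).not).Realize _
        rw [if_neg hkm]
        show ((pat k k).not).Realize _
        rw [Formula.realize_not, Formula.realize_relabel]
        have hass : ((fun p : ℕ × (α ⊕ β) => e (g p.1) p.2) ∘
            (Sum.elim (fun x => (k, Sum.inl x)) (fun y => (k, Sum.inr y)))) =
            Sum.elim (c (g k)) (d (g k)) := by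
          funext z
          rcases z with x | y <;> rfl
        rw [hass]
        exact hd2 (g k)
  obtain ⟨N, w, hw⟩ := exists_model_realize T F hfin
  let aN : ℕ → α → N := fun i x => w (i, Sum.inl x)
  let bN : β → N := fun y => w (0, Sum.inr y)
  have hind : IsIndiscernible (L := L) aN := by
    intro n iu jv hiu hjv ψ
    have h1 := hw (Sum.inl ⟨n, ψ.relabel (fun p => (p.1, Sum.inl p.2)), ⟨iu, hiu⟩, ⟨jv, hjv⟩⟩)
    have h2 : ((lift n (ψ.relabel (fun p => (p.1, Sum.inl p.2))) iu).iff
        (lift n (ψ.relabel (fun p => (p.1, Sum.inl p.2))) jv)).Realize w := h1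
    rw [Formula.realize_iff, Formula.realize_relabel, Formula.realize_relabel,
      Formula.realize_relabel, Formula.realize_relabel] at h2
    exact h2
  have hmem : ∀ i : ℕ, 0 < i → aN i ∈ instSet φ bN := by
    intro i hi
    have h1 := hw (Sum.inr (0, i))
    have h2 : (if 0 < i then pat i 0 else (pat 0 0).not).Realize w := h1
    rw [if_pos hi] at h2
    have h3 : (pat i 0).Realize w := h2
    rw [Formula.realize_relabel] at h3
    have hass : (w ∘ (Sum.elim (fun x => (i, Sum.inl x)) (fun y => (0, Sum.inr y)))) =
        Sum.elim (aN i) bN := by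
      funext z
      rcases z with x | y <;> rfl
    rwa [hass] at h3
  have h0 := hcl N bN aN hind hmem
  have h1 := hw (Sum.inr (0, 0))
  have h2 : (if (0 : ℕ) < (0 : ℕ) then pat 0 0 else (pat 0 0).not).Realize w := h1
  rw [if_neg (lt_irrefl 0)] at h2
  have h3 : ((pat 0 0).not).Realize w := h2
  rw [Formula.realize_not, Formula.realize_relabel] at h3
  have hass : (w ∘ (Sum.elim (fun x => ((0 : ℕ), Sum.inl x)) (fun y => ((0 : ℕ), Sum.inr y)))) =
      Sum.elim (aN 0) bN := by
    funext z
    rcases z with x | y <;> rfl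
  rw [hass] at h3
  exact h3 h0

/-- For a complete theory `T`, a formula `φ(x; y)` is an equation if and only if in
every model `M` of `T` and for every `b` in `M` the set `φ(M, b)` is indiscernibly closed. -/
theorem isEquation_iff_indiscerniblyClosed {α β : Type (max u v)} [Finite α] [Finite β]
    (hT : T.IsComplete) (φ : L.Formula (α ⊕ β)) :
    IsEquation T φ ↔
      ∀ (M : Theory.ModelType.{u, v, max u v} T) (b : β → M),
        IsIndiscerniblyClosed (L := L) (instSet φ b) := by
  exact ⟨fun hEq M b => forward T φ hEq M b, fun h => backward T φ h⟩

end Equationality
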